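/- Let P_n be a polynomial of degree n all of whose zeros lie in the open unit disk 𝔻, and let dμ = c·dθ/(2π·|P_n(e^{iθ})|²) where c > 0 is chosen so that μ is a probability measure on ∂𝔻. Then for every integer j with j < n (including negative j), ⟨z^j, P_n⟩_{L²(∂𝔻, dμ)} = 0, i.e., ∫ e^{−ijθ}·P_n(e^{iθ}) dμ(θ) = 0. -/

import Mathlib

open MeasureTheory Polynomial Filter

noncomputable section

/-- A nontrivial probability measure on the unit circle: a probability measure on `ℂ`
supported on `{z : ‖z‖ = 1}` that is not concentrated on any finite set
(equivalently, its support is infinite). -/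
structure IsNontrivialOnCircle (μ : Measure ℂ) : Prop where
  prob : IsProbabilityMeasure μ
  onCircle : μ {z : ℂ | ‖z‖ = 1}ᶜ = 0
  infiniteSupport : ∀ s : Finset ℂ, μ ((↑s : Set ℂ)ᶜ) ≠ 0

/-- `Φ` is the family of monic orthogonal polynomials for `μ`: each `Φ n` is monic of
degree `n` and orthogonal in `L²(∂𝔻, dμ)` to `z^j` for `j = 0, …, n-1`. -/
def IsMonicOPUC (μ : Measure ℂ) (Φ : ℕ → Polynomial ℂ) : Prop :=
  ∀ n : ℕ, ((Φ n).Monic ∧ (Φ n).natDegree = n) ∧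
    ∀ j < n, ∫ z, (starRingEnd ℂ) z ^ j * (Φ n).eval z ∂μ = 0

/-- Verblunsky coefficients: `α n = -conj (Φ (n+1) (0))`. -/
def verblunsky (Φ : ℕ → Polynomial ℂ) (n : ℕ) : ℂ :=
  - (starRingEnd ℂ) ((Φ (n + 1)).eval 0)

/-- Squared `L²(dμ)` norm of a polynomial. -/
def polyNormSq (μ : Measure ℂ) (P : Polynomial ℂ) : ℝ :=
  ∫ z, ‖P.eval z‖ ^ 2 ∂μ

/-- Orthonormal polynomial: `φ = Φ / ‖Φ‖_{L²(dμ)}`. -/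
def orthonormalize (μ : Measure ℂ) (P : Polynomial ℂ) : Polynomial ℂ :=
  Polynomial.C ((Real.sqrt (polyNormSq μ P) : ℂ))⁻¹ * P

/-- The reversed polynomial `P^{*,n}(z) = z^n conj (P (1/conj z))`. -/
def revStar (n : ℕ) (P : Polynomial ℂ) : Polynomial ℂ :=
  ∑ j ∈ Finset.range (n + 1),
    Polynomial.C ((starRingEnd ℂ) (P.coeff (n - j))) * Polynomial.X ^ j

lemma revStar_eval {n : ℕ} {P : Polynomial ℂ} (hP : P.natDegree ≤ n) {z : ℂ} (hz : z ≠ 0) :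
    (revStar n P).eval z = z ^ n * (starRingEnd ℂ) (P.eval ((starRingEnd ℂ) z)⁻¹) := by
  simp only [revStar, Polynomial.eval_finset_sum, Polynomial.eval_mul, Polynomial.eval_C,
    Polynomial.eval_pow, Polynomial.eval_X]
  rw [P.eval_eq_sum_range' (Nat.lt_succ_of_le hP), map_sum, Finset.mul_sum,
    ← Finset.sum_range_reflect]
  refine Finset.sum_congr rfl fun j hj => ?_
  have hj' : j ≤ n := Nat.lt_succ_iff.mp (Finset.mem_range.mp hj)
  simp only [map_mul, map_pow, map_inv₀, Complex.conj_conj]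
  have h3 : n - (n + 1 - 1 - j) = j := by omega
  rw [h3]
  have h2 : z ^ n = z ^ (n + 1 - 1 - j) * z ^ j := by rw [← pow_add]; congr 1; omega
  rw [h2, inv_pow]
  field_simp

lemma revStar_eval_zero (n : ℕ) (P : Polynomial ℂ) :
    (revStar n P).eval 0 = (starRingEnd ℂ) (P.coeff n) := by
  simp only [revStar, Polynomial.eval_finset_sum, Polynomial.eval_mul, Polynomial.eval_C,
    Polynomial.eval_pow, Polynomial.eval_X]
  rw [Finset.sum_eq_single 0]
  · simp
  · intro j _ hj; simp [zero_pow hj]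
  · simp

lemma revStar_ne_zero {n : ℕ} {P : Polynomial ℂ} (hdeg : P.degree = n)
    (hzeros : ∀ z : ℂ, P.eval z = 0 → ‖z‖ < 1) {z : ℂ} (hz : ‖z‖ ≤ 1) :
    (revStar n P).eval z ≠ 0 := by
  have hP0 : P ≠ 0 := fun h => by simp [h] at hdeg
  have hnd : P.natDegree = n := Polynomial.natDegree_eq_of_degree_eq_some hdeg
  rcases eq_or_ne z 0 with rfl | hz0
  · rw [revStar_eval_zero]
    simpa using hnd ▸ Polynomial.leadingCoeff_ne_zero.mpr hP0
  · rw [revStar_eval hnd.le hz0]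
    refine mul_ne_zero (pow_ne_zero _ hz0) ?_
    simp only [ne_eq, _root_.map_eq_zero]
    intro h
    have h2 := hzeros _ h
    rw [norm_inv] at h2
    have h3 : ‖(starRingEnd ℂ) z‖ = ‖z‖ := by simp
    rw [h3] at h2
    have h1 : (1:ℝ) ≤ ‖z‖⁻¹ := (one_le_inv₀ (norm_pos_iff.mpr hz0)).mpr hz
    linarith

/-- Erdélyi et al.: if `P` has degree `n` with all zeros in `𝔻` and
`dμ = c dθ/(2π|P(e^{iθ})|²)` is a probability measure, then `⟨z^j, P⟩_{L²(dμ)} = 0`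
for all integers `j < n`. -/
theorem stmt10 (n : ℕ) (P : Polynomial ℂ) (hdeg : P.degree = n)
    (hzeros : ∀ z : ℂ, P.eval z = 0 → ‖z‖ < 1) (c : ℝ) (hc : 0 < c)
    (hnorm : ∫ θ in (0:ℝ)..(2 * Real.pi),
        c / (2 * Real.pi * ‖P.eval (Complex.exp (Complex.I * θ))‖ ^ 2) = 1) :
    ∀ j : ℤ, j < (n : ℤ) →
      (∫ θ in (0:ℝ)..(2 * Real.pi),
          Complex.exp (-Complex.I * (j : ℂ) * (θ : ℂ)) * P.eval (Complex.exp (Complex.I * θ)) *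
            ((c : ℂ) / (2 * Real.pi * (‖P.eval (Complex.exp (Complex.I * θ))‖ : ℂ) ^ 2))) = 0 := by
  intro j hj
  set Q := revStar n P with hQ
  set m : ℕ := ((n : ℤ) - 1 - j).toNat with hm
  have hm1 : (m : ℤ) = (n : ℤ) - 1 - j := Int.toNat_of_nonneg (by omega)
  have key : ∀ θ : ℝ,
      Complex.exp (-Complex.I * (j : ℂ) * (θ : ℂ)) * P.eval (Complex.exp (Complex.I * θ)) *
        ((c : ℂ) / (2 * Real.pi * (‖P.eval (Complex.exp (Complex.I * θ))‖ : ℂ) ^ 2)) =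
      ((c : ℂ) / (2 * Real.pi) * (-Complex.I)) *
        (deriv (circleMap 0 1) θ • (circleMap 0 1 θ ^ m * (Q.eval (circleMap 0 1 θ))⁻¹)) := by
    intro θ
    have hz : circleMap 0 1 θ = Complex.exp (Complex.I * θ) := by
      simp [circleMap, mul_comm]
    set z : ℂ := Complex.exp (Complex.I * θ) with hzdef
    set E : ℂ := Complex.exp (-Complex.I * (j : ℂ) * (θ : ℂ)) with hE
    have hznorm : ‖z‖ = 1 := by
      rw [hzdef, mul_comm, Complex.norm_exp_ofReal_mul_I]
    have hz0 : z ≠ 0 := by rw [hzdef]; exact Complex.exp_ne_zero _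
    have hPz : P.eval z ≠ 0 := fun h => absurd (hzeros z h) (by rw [hznorm]; exact lt_irrefl 1)
    have hQz : Q.eval z ≠ 0 := revStar_ne_zero hdeg hzeros hznorm.le
    have hconjz : (starRingEnd ℂ) z = z⁻¹ := by
      have h1 : z * (starRingEnd ℂ) z = 1 := by
        rw [Complex.mul_conj]
        norm_cast
        rw [Complex.normSq_eq_norm_sq, hznorm]
        norm_num
      exact eq_inv_of_mul_eq_one_left (by rwa [mul_comm] at h1)
    have hB : Q.eval z = z ^ n * (starRingEnd ℂ) (P.eval z) := by
      rw [hQ, revStar_eval (Polynomial.natDegree_eq_of_degree_eq_some hdeg).le hz0, hconjz,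
        inv_inv]
    have hnormsq : ((‖P.eval z‖ : ℂ)) ^ 2 = P.eval z * (starRingEnd ℂ) (P.eval z) := by
      rw [Complex.mul_conj]
      norm_cast
      rw [← Complex.sq_norm]
    have hexp : E * z ^ n = z ^ (m + 1) := by
      have h1 : E = z ^ (-j : ℤ) := by
        rw [hE, hzdef, ← Complex.exp_int_mul]
        congr 1
        push_cast
        ring
      rw [h1, ← zpow_natCast z n, ← zpow_add₀ hz0, ← zpow_natCast z (m + 1)]
      congr 1
      push_cast
      omega
    have h3 : z ^ m * z = E * z ^ n := by rw [hexp, pow_succ]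
    rw [deriv_circleMap, hz, smul_eq_mul, hnormsq, hB]
    rw [mul_assoc ((c:ℂ) / (2 * Real.pi)) (-Complex.I)]
    have hI : (-Complex.I) * (z * Complex.I *
        (z ^ m * (z ^ n * (starRingEnd ℂ) (P.eval z))⁻¹)) =
        (z ^ m * z) * (z ^ n * (starRingEnd ℂ) (P.eval z))⁻¹ := by
      linear_combination (-(z * (z ^ m * (z ^ n * (starRingEnd ℂ) (P.eval z))⁻¹))) *
        Complex.I_mul_I
    rw [hI, h3]
    have hC : (starRingEnd ℂ) (P.eval z) ≠ 0 := by simpa using hPz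
    have hpi : (Real.pi : ℂ) ≠ 0 := by
      exact_mod_cast Real.pi_ne_zero
    field_simp
  rw [intervalIntegral.integral_congr (g := fun θ =>
      ((c : ℂ) / (2 * Real.pi) * (-Complex.I)) *
        (deriv (circleMap 0 1) θ • (circleMap 0 1 θ ^ m * (Q.eval (circleMap 0 1 θ))⁻¹)))
      (fun θ _ => key θ),
    intervalIntegral.integral_const_mul]
  have h0 : (∮ z in C(0, 1), z ^ m * (Q.eval z)⁻¹) = 0 := by
    apply Complex.circleIntegral_eq_zero_of_differentiable_on_off_countable zero_le_one
      Set.countable_empty (s := ∅)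
    · intro z hz
      have hz1 : ‖z‖ ≤ 1 := by simpa using Metric.mem_closedBall.mp hz
      exact (((differentiable_pow m).differentiableAt).mul
        ((Q.differentiableAt).inv
          (revStar_ne_zero hdeg hzeros hz1))).continuousAt.continuousWithinAt
    · intro z hz
      have hz1 : ‖z‖ ≤ 1 := by
        have := Metric.ball_subset_closedBall hz.1
        simpa using Metric.mem_closedBall.mp this
      exact ((differentiable_pow m).differentiableAt).mul
        ((Q.differentiableAt).inv (revStar_ne_zero hdeg hzeros hz1))
  rw [circleIntegral] at h0
  rw [h0, mul_zero]

end
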